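/- Let V be a finite type with at least two elements, let T be a tree on V (a connected acyclic simple graph), and let w : V → V → ℝ be a symmetric weight function. Assume the following path-monotonicity property: for all vertices i, u, v, if u lies strictly between i and v on the unique T-path from i to v (i.e., u is an interior vertex of that path, u ≠ i and u ≠ v), then w i u < w i v. Then T is the unique minimum spanning tree for w: for every tree T' on V (connected acyclic simple graph on the same vertex set) with T' ≠ T, the sum of w over the edges of T' is strictly greater than the sum of w over the edges of T. -/

import Mathlib

/-- The total weight of (the edges of) a simple graph on a finite vertex type,
with respect to a symmetric weight function `w`. -/
noncomputable def graphWeight {V : Type*} [Fintype V]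
    (w : V → V → ℝ) (hw : ∀ a b, w a b = w b a) (G : SimpleGraph V) : ℝ :=
  ∑ e ∈ (Set.toFinite G.edgeSet).toFinset, Sym2.lift ⟨w, hw⟩ e

open SimpleGraph

attribute [local instance] Classical.propDecidable

section Aux

variable {V : Type*}

lemma graphWeight_eq [Fintype V] (w : V → V → ℝ) (hw : ∀ a b, w a b = w b a)
    (G : SimpleGraph V) [Fintype G.edgeSet] :
    graphWeight w hw G = ∑ e ∈ G.edgeFinset, Sym2.lift ⟨w, hw⟩ e := by
  unfold graphWeight
  congr 1
  ext e
  simp only [Set.Finite.mem_toFinset, edgeFinset, Set.mem_toFinset]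

/-- Every edge of a path between non-adjacent vertices is strictly lighter
than the weight between the endpoints. -/
lemma edge_lt_of_path_monotone {T : SimpleGraph V} (hT : T.IsAcyclic)
    (w : V → V → ℝ) (hw : ∀ a b, w a b = w b a)
    (hmono : ∀ (i u v : V) (p : T.Path i v),
      u ∈ p.val.support → u ≠ i → u ≠ v → w i u < w i v) :
    ∀ {a b : V} (p : T.Walk a b), p.IsPath → ¬ T.Adj a b →
      ∀ f ∈ p.edges, Sym2.lift ⟨w, hw⟩ f < w a b := by
  intro a b p
  induction p with
  | nil => intro _ _ f hf; simp at hf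
  | @cons a c b h q ih =>
    intro hp hnadj f hf
    have hca : c ≠ a := h.ne'
    have hcb : c ≠ b := by rintro rfl; exact hnadj h
    have hwcb : w c b < w a b := by
      have hc : c ∈ (Walk.cons h q).reverse.support := by
        simp [Walk.support_reverse]
      have := hmono b c a ⟨(Walk.cons h q).reverse, hp.reverse⟩ hc hcb hca
      calc w c b = w b c := hw c b
        _ < w b a := this
        _ = w a b := hw b a
    rw [Walk.edges_cons] at hf
    rcases List.mem_cons.mp hf with rfl | hf
    · have hc : c ∈ (Walk.cons h q).support := by simp
      simpa using hmono a c b ⟨Walk.cons h q, hp⟩ hc hca hcb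
    · by_cases hadj : T.Adj c b
      · have hq : q.IsPath := hp.of_cons
        have : (⟨q, hq⟩ : T.Path c b) = Path.singleton hadj := hT.path_unique _ _
        have hq' : q = (Path.singleton hadj).val := congrArg Subtype.val this
        rw [hq'] at hf
        simp only [Path.singleton, Walk.edges_cons, Walk.edges_nil,
          List.mem_singleton] at hf
        subst hf
        simpa using hwcb
      · exact lt_trans (ih hp.of_cons hadj f hf) hwcb

/-- On a walk from a `G0`-reachable vertex to a non-reachable one, some edge
crosses the reachability boundary. -/
lemma exists_crossing_edge (G0 : SimpleGraph V) (a : V) {T : SimpleGraph V} :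
    ∀ {c b : V} (p : T.Walk c b), G0.Reachable a c → ¬ G0.Reachable a b →
      ∃ x y, s(x, y) ∈ p.edges ∧ G0.Reachable a x ∧ ¬ G0.Reachable a y := by
  intro c b p
  induction p with
  | nil => intro h1 h2; exact absurd h1 h2
  | @cons c d b h q ih =>
    intro h1 h2
    by_cases hd : G0.Reachable a d
    · obtain ⟨x, y, hxy, hx, hy⟩ := ih hd h2
      exact ⟨x, y, by simp [hxy], hx, hy⟩
    · exact ⟨c, d, by simp, h1, hd⟩

/-- Removing one edge of a connected graph leaves every vertex reachable from
one of its two endpoints. -/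
lemma reachable_endpoint {G' : SimpleGraph V} {a b : V} :
    ∀ {u : V} (_ : G'.Walk u a), (G' \ fromEdgeSet {s(a, b)}).Reachable a u ∨
      (G' \ fromEdgeSet {s(a, b)}).Reachable b u := by
  intro u p
  induction p with
  | nil => exact Or.inl (Reachable.refl _)
  | @cons u c a h q ih =>
    by_cases he : s(u, c) = s(a, b)
    · rcases Sym2.eq_iff.mp he with ⟨rfl, rfl⟩ | ⟨rfl, rfl⟩
      · exact Or.inl (Reachable.refl _)
      · exact Or.inr (Reachable.refl _)
    · have hadj : (G' \ fromEdgeSet {s(a, b)}).Adj u c := by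
        rw [sdiff_adj]
        exact ⟨h, by simp [fromEdgeSet_adj, he]⟩
      rcases ih with hc | hc
      · exact Or.inl (hc.trans hadj.symm.reachable)
      · exact Or.inr (hc.trans hadj.symm.reachable)

/-- Exchanging an edge of an acyclic graph for a crossing edge keeps it
acyclic. -/
lemma isAcyclic_swap {G' : SimpleGraph V} (hG' : G'.IsAcyclic) {e : Sym2 V} {x y a : V}
    (hx : (G' \ fromEdgeSet {e}).Reachable a x)
    (hy : ¬ (G' \ fromEdgeSet {e}).Reachable a y) :
    ((G' \ fromEdgeSet {e}) ⊔ fromEdgeSet {s(x, y)}).IsAcyclic := by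
  classical
  set G0 := G' \ fromEdgeSet {e} with hG0
  set G2 := G0 ⊔ fromEdgeSet {s(x, y)} with hG2
  intro v c hc
  by_cases hf : s(x, y) ∈ c.edges
  · have h2 : (G2 \ fromEdgeSet {s(x, y)}).Reachable x y :=
      (adj_and_reachable_delete_edges_iff_exists_cycle.mpr ⟨v, c, hc, hf⟩).2
    have hle : (G2 \ fromEdgeSet {s(x, y)}) ≤ G0 := by
      intro p q hpq
      rw [sdiff_adj] at hpq
      obtain ⟨hpq1, hpq2⟩ := hpq
      rw [hG2, sup_adj] at hpq1
      rcases hpq1 with h1 | h1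
      · exact h1
      · exact absurd h1 hpq2
    exact hy (hx.trans (h2.mono hle))
  · have hsub : ∀ g ∈ c.edges, g ∈ G'.edgeSet := by
      intro g hg
      have hmem := c.edges_subset_edgeSet hg
      rw [hG2, edgeSet_sup, hG0, edgeSet_sdiff] at hmem
      rcases hmem with ⟨h1, _⟩ | h1
      · exact h1
      · exfalso
        apply hf
        rw [edgeSet_fromEdgeSet] at h1
        rw [← h1.1]
        exact hg
    exact hG' (c.transfer G' hsub) (hc.transfer hsub)

end Aux


/-- combinatorial core of the paper's main theorem: if a
symmetric weight function `w` on the vertices of a tree `T` is strictly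
increasing along tree paths away from any fixed vertex (every interior vertex
`u` of the unique path from `i` to `v` satisfies `w i u < w i v`), then `T` is
the unique minimum spanning tree for `w`: any other tree on the same vertex set
has strictly larger total weight. -/
theorem unique_mst_of_path_monotone
    {V : Type*} [Fintype V] [Nontrivial V]
    (T : SimpleGraph V) (hT : T.IsTree)
    (w : V → V → ℝ) (hw : ∀ a b, w a b = w b a)
    (hmono : ∀ (i u v : V) (p : T.Path i v),
      u ∈ p.val.support → u ≠ i → u ≠ v → w i u < w i v) :
    ∀ T' : SimpleGraph V, T'.IsTree → T' ≠ T →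
      graphWeight w hw T < graphWeight w hw T' := by
  classical
  have key : ∀ (n : ℕ) (T' : SimpleGraph V), T'.IsTree →
      (T'.edgeFinset \ T.edgeFinset).card = n → T' ≠ T →
      graphWeight w hw T < graphWeight w hw T' := by
    intro n
    induction n with
    | zero =>
      intro T' hT' hcard hne
      exfalso
      apply hne
      rw [← edgeFinset_inj]
      apply Finset.eq_of_subset_of_card_le
      · rwa [Finset.card_eq_zero, Finset.sdiff_eq_empty_iff_subset] at hcard
      · have h1 := hT.card_edgeFinset
        have h2 := hT'.card_edgeFinset
        omega
    | succ n ih =>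
      intro T' hT' hcard hne
      have hnonempty : (T'.edgeFinset \ T.edgeFinset).Nonempty := by
        rw [← Finset.card_pos, hcard]; omega
      obtain ⟨e, he⟩ := hnonempty
      rw [Finset.mem_sdiff] at he
      obtain ⟨he1, he2⟩ := he
      revert hcard he1 he2
      induction e using Sym2.ind with
      | _ a b =>
      intro hcard he1 he2
      have hab' : T'.Adj a b := T'.mem_edgeSet.mp (mem_edgeFinset.mp he1)
      have hab : ¬ T.Adj a b := fun h => he2 (mem_edgeFinset.mpr (T.mem_edgeSet.mpr h))
      have hne_ab : a ≠ b := hab'.ne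
      set G0 : SimpleGraph V := T' \ fromEdgeSet {s(a, b)} with hG0def
      have hbridge : ¬ G0.Reachable a b :=
        (isBridge_iff.mp ((isAcyclic_iff_forall_adj_isBridge.mp hT'.2) hab'))
      obtain ⟨p0⟩ := hT.1.preconnected a b
      set q : T.Path a b := p0.toPath with hqdef
      obtain ⟨x, y, hxy_mem, hx, hy⟩ :=
        exists_crossing_edge G0 a q.val (Reachable.refl a) hbridge
      have hxyT : T.Adj x y := q.val.adj_of_mem_edges hxy_mem
      have hxy_ne : x ≠ y := hxyT.ne
      have hfT : s(x, y) ∈ T.edgeFinset := mem_edgeFinset.mpr (T.mem_edgeSet.mpr hxyT)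
      have hfe : s(x, y) ≠ s(a, b) := by
        intro h
        exact he2 (h ▸ hfT)
      have hfT' : ¬ T'.Adj x y := by
        intro hadj
        apply hy
        refine hx.trans (Adj.reachable ?_)
        rw [hG0def, sdiff_adj]
        exact ⟨hadj, by simp [fromEdgeSet_adj, hfe]⟩
      obtain ⟨T'', hT''def⟩ : ∃ T'' : SimpleGraph V,
          T'' = G0 ⊔ fromEdgeSet {s(x, y)} := ⟨_, rfl⟩
      have hacyc : T''.IsAcyclic := by rw [hT''def]; exact isAcyclic_swap hT'.2 hx hy
      have hG0le : G0 ≤ T'' := hT''def ▸ le_sup_left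
      have hfadj : T''.Adj x y := by
        rw [hT''def, sup_adj]
        exact Or.inr ((fromEdgeSet_adj _).mpr ⟨rfl, hxy_ne⟩)
      have hcomp : ∀ v, G0.Reachable a v ∨ G0.Reachable b v := by
        intro v
        obtain ⟨pv⟩ := hT'.1.preconnected v a
        exact reachable_endpoint pv
      have hby : G0.Reachable b y := (hcomp y).resolve_left hy
      have hreach_ab : T''.Reachable a b :=
        ((hx.mono hG0le).trans hfadj.reachable).trans ((hby.mono hG0le).symm)
      have hconn : T''.Connected := by
        rw [connected_iff]
        refine ⟨?_, ⟨Classical.arbitrary V⟩⟩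
        have hall : ∀ v, T''.Reachable a v := by
          intro v
          rcases hcomp v with h | h
          · exact h.mono hG0le
          · exact hreach_ab.trans (h.mono hG0le)
        intro u v
        exact (hall u).symm.trans (hall v)
      have hT''tree : T''.IsTree := ⟨hconn, hacyc⟩
      have hT''fin : T''.edgeFinset = insert (s(x, y)) (T'.edgeFinset.erase (s(a, b))) := by
        ext g
        simp only [mem_edgeFinset, hT''def, edgeSet_sup, hG0def, edgeSet_sdiff,
          edgeSet_fromEdgeSet, Finset.mem_insert, Finset.mem_erase, Set.mem_union,
          Set.mem_diff, Set.mem_setOf_eq, Set.mem_singleton_iff, mem_edgeFinset]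
        constructor
        · rintro (⟨h1, h2⟩ | ⟨h1, h2⟩)
          · refine Or.inr ⟨?_, h1⟩
            intro hg
            exact h2 ⟨hg, by simp [hg, hne_ab]⟩
          · exact Or.inl h1
        · rintro (rfl | ⟨h1, h2⟩)
          · exact Or.inr ⟨rfl, by simp [hxy_ne]⟩
          · exact Or.inl ⟨h2, fun hg => h1 hg.1⟩
      have hfe_in : s(x, y) ∉ T'.edgeFinset.erase (s(a, b)) := by
        intro hmem
        exact hfT' (T'.mem_edgeSet.mp (mem_edgeFinset.mp (Finset.mem_of_mem_erase hmem)))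
      have hsum : graphWeight w hw T'' =
          Sym2.lift ⟨w, hw⟩ (s(x, y)) +
            (graphWeight w hw T' - Sym2.lift ⟨w, hw⟩ (s(a, b))) := by
        rw [graphWeight_eq, graphWeight_eq, hT''fin, Finset.sum_insert hfe_in,
          Finset.sum_erase_eq_sub he1]
      have hwlt : Sym2.lift ⟨w, hw⟩ (s(x, y)) < Sym2.lift ⟨w, hw⟩ (s(a, b)) := by
        have := edge_lt_of_path_monotone hT.2 w hw hmono q.val q.2 hab _ hxy_mem
        simpa using this
      have hlt : graphWeight w hw T'' < graphWeight w hw T' := by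
        rw [hsum]; linarith
      have hmeas : (T''.edgeFinset \ T.edgeFinset) =
          (T'.edgeFinset \ T.edgeFinset).erase (s(a, b)) := by
        ext g
        simp only [Finset.mem_sdiff, hT''fin, Finset.mem_insert, Finset.mem_erase]
        constructor
        · rintro ⟨h1 | ⟨h2, h3⟩, h4⟩
          · exact absurd (h1 ▸ hfT) h4
          · exact ⟨h2, h3, h4⟩
        · rintro ⟨h2, h3, h4⟩
          exact ⟨Or.inr ⟨h2, h3⟩, h4⟩
      have hmeascard : (T''.edgeFinset \ T.edgeFinset).card = n := by
        rw [hmeas, Finset.card_erase_of_mem (Finset.mem_sdiff.mpr ⟨he1, he2⟩), hcard]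
        omega
      by_cases hTT : T'' = T
      · rw [← hTT]; exact hlt
      · exact lt_trans (ih T'' hT''tree hmeascard hTT) hlt
  intro T' h1 h2
  exact key _ T' h1 rfl h2
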